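/- Let Γ be a Fuchsian group with trivial stabilizer of i, and for a > 0 let Γᵃ be its set of elements of Frobenius norm at most a. If ‖A‖ > a for A ∈ Γ, then the half-plane H_i(A) = {z : d_ℍ(z,i) ≤ d_ℍ(z, A·i)} contains the open ball B(i, log ν(a)); consequently removing A from the intersection defining the Dirichlet domain does not change it inside B(i, log ν(a)). -/

import Mathlib

open UpperHalfPlane

/-- The Frobenius norm of a real 2×2 matrix: `‖A‖ = √(tr(AᵀA))`. -/
noncomputable def frobNorm (A : Matrix (Fin 2) (Fin 2) ℝ) : ℝ :=
  Real.sqrt (Matrix.trace (A.transpose * A))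

/-- The function `ν(a) = √((a² + √(a⁴ − 4))/2)`. -/
noncomputable def nu (a : ℝ) : ℝ := Real.sqrt ((a ^ 2 + Real.sqrt (a ^ 4 - 4)) / 2)

lemma cosh_dist_I_smul (A : Matrix.SpecialLinearGroup (Fin 2) ℝ) :
    Real.cosh (dist UpperHalfPlane.I (A • UpperHalfPlane.I)) =
      ((A.1 0 0)^2 + (A.1 0 1)^2 + (A.1 1 0)^2 + (A.1 1 1)^2) / 2 := by
  set α := A.1 0 0; set β := A.1 0 1; set γ := A.1 1 0; set δ := A.1 1 1
  have hdet : α * δ - β * γ = 1 := by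
    have := A.2; rwa [Matrix.det_fin_two] at this
  have hc : 0 < γ^2 + δ^2 := by
    rcases eq_or_ne γ 0 with h | h
    · rcases eq_or_ne δ 0 with h' | h'
      · exfalso; rw [h, h'] at hdet; simp at hdet
      · positivity
    · positivity
  have hd : ((γ : ℂ) * Complex.I + δ) ≠ 0 := by
    intro h
    have : Complex.normSq ((γ : ℂ) * Complex.I + δ) = 0 := by rw [h]; simp
    simp [Complex.normSq_apply] at this
    nlinarith [this]
  have hcC : ((γ:ℂ)^2 + (δ:ℂ)^2) ≠ 0 := by
    intro h
    have : ((γ^2+δ^2 : ℝ) : ℂ) = 0 := by push_cast; exact h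
    exact hc.ne' (by exact_mod_cast this)
  have hdetC : (α:ℂ)*δ - (β:ℂ)*γ = 1 := by exact_mod_cast hdet
  have hw : ((A • UpperHalfPlane.I : ℍ) : ℂ) =
      (((α*γ+β*δ)/(γ^2+δ^2) : ℝ) : ℂ) + ((1/(γ^2+δ^2) : ℝ) : ℂ) * Complex.I := by
    rw [UpperHalfPlane.specialLinearGroup_apply]
    simp only [UpperHalfPlane.coe_mk, UpperHalfPlane.coe_I, Algebra.algebraMap_self,
      RingHom.id_apply]
    push_cast
    rw [div_eq_iff hd]
    field_simp
    linear_combination (Complex.I * (δ:ℂ) - γ) * hdetC - (γ:ℂ) * Complex.I_sq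
  have him : (A • UpperHalfPlane.I : ℍ).im = 1/(γ^2+δ^2) := by
    rw [← UpperHalfPlane.coe_im, hw]
    simp only [Complex.add_im, Complex.ofReal_im, Complex.mul_im, Complex.ofReal_re,
      Complex.I_im, Complex.I_re]
    ring
  have hdist : dist (UpperHalfPlane.I : ℂ) ((A • UpperHalfPlane.I : ℍ) : ℂ) ^ 2 =
      ((α*γ+β*δ)/(γ^2+δ^2))^2 + (1 - 1/(γ^2+δ^2))^2 := by
    rw [Complex.dist_eq, Complex.sq_norm, hw, UpperHalfPlane.coe_I]
    simp only [Complex.normSq_apply, Complex.sub_re, Complex.sub_im, Complex.add_re,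
      Complex.add_im, Complex.ofReal_re, Complex.ofReal_im, Complex.mul_re, Complex.mul_im,
      Complex.I_re, Complex.I_im]
    ring
  rw [UpperHalfPlane.cosh_dist, hdist, him, UpperHalfPlane.I_im]
  field_simp
  linear_combination (-(α*δ-β*γ+1)) * hdet

lemma nu_one_le {a : ℝ} (ha : Real.sqrt 2 ≤ a) : 1 ≤ nu a := by
  have h2 : (2:ℝ) ≤ a^2 := by
    have h0 : (0:ℝ) ≤ Real.sqrt 2 := Real.sqrt_nonneg 2
    nlinarith [Real.sq_sqrt (by norm_num : (2:ℝ) ≥ 0)]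
  have hs : 0 ≤ Real.sqrt (a^4 - 4) := Real.sqrt_nonneg _
  rw [nu]
  rw [show (1:ℝ) = Real.sqrt 1 by simp]
  apply Real.sqrt_le_sqrt
  linarith

lemma cosh_two_log_nu {a : ℝ} (ha : Real.sqrt 2 ≤ a) :
    Real.cosh (2 * Real.log (nu a)) = a^2 / 2 := by
  have h2 : (2:ℝ) ≤ a^2 := by
    nlinarith [Real.sq_sqrt (by norm_num : (2:ℝ) ≥ 0), Real.sqrt_nonneg 2]
  have h4 : (0:ℝ) ≤ a^4 - 4 := by nlinarith
  have hs : 0 ≤ Real.sqrt (a^4 - 4) := Real.sqrt_nonneg _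
  have hs2 : Real.sqrt (a^4 - 4) ^ 2 = a^4 - 4 := Real.sq_sqrt h4
  have hnu1 : 1 ≤ nu a := nu_one_le ha
  have hnupos : 0 < nu a := lt_of_lt_of_le one_pos hnu1
  have hnusq : (nu a)^2 = (a^2 + Real.sqrt (a^4-4)) / 2 :=
    Real.sq_sqrt (by linarith)
  rw [Real.cosh_eq]
  rw [show 2 * Real.log (nu a) = Real.log ((nu a)^2) by
    rw [Real.log_pow]; push_cast; ring]
  rw [Real.exp_log (by positivity), ← Real.log_inv, Real.exp_log (by positivity)]
  rw [hnusq]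
  have hx : a^2 + Real.sqrt (a^4-4) > 0 := by nlinarith
  field_simp
  nlinarith [hs2, hx]

/-- For `A ∈ SL₂(ℝ)` with `A·i ≠ i` and Frobenius norm `‖A‖ > a ≥ √2`, the open
hyperbolic ball `B(i, log ν(a))` is contained in the half-plane
`H_i(A) = {z : d(z,i) ≤ d(z, A·i)}`. -/
theorem ball_subset_halfPlane_of_norm_gt (A : Matrix.SpecialLinearGroup (Fin 2) ℝ)
    (hA : A • UpperHalfPlane.I ≠ UpperHalfPlane.I) (a : ℝ) (ha : Real.sqrt 2 ≤ a)
    (hnorm : a < frobNorm A.1) :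
    Metric.ball UpperHalfPlane.I (Real.log (nu a)) ⊆
      {z : ℍ | dist z UpperHalfPlane.I ≤ dist z (A • UpperHalfPlane.I)} := by
  have ha0 : 0 ≤ a := le_trans (Real.sqrt_nonneg 2) ha
  have htr_eq : (Matrix.trace (A.1.transpose * A.1)) =
      (A.1 0 0)^2 + (A.1 0 1)^2 + (A.1 1 0)^2 + (A.1 1 1)^2 := by
    simp [Matrix.trace_fin_two, Matrix.mul_apply, Fin.sum_univ_two]
    ring
  have htr_nonneg : 0 ≤ Matrix.trace (A.1.transpose * A.1) := by
    rw [htr_eq]; positivity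
  have htr : a^2 < Matrix.trace (A.1.transpose * A.1) := by
    rw [frobNorm] at hnorm
    exact (Real.lt_sqrt ha0).mp hnorm
  have hcosh : Real.cosh (dist UpperHalfPlane.I (A • UpperHalfPlane.I)) =
      ((A.1 0 0)^2 + (A.1 0 1)^2 + (A.1 1 0)^2 + (A.1 1 1)^2) / 2 :=
    cosh_dist_I_smul A
  have hlog0 : 0 ≤ Real.log (nu a) := Real.log_nonneg (nu_one_le ha)
  have hkey : 2 * Real.log (nu a) < dist UpperHalfPlane.I (A • UpperHalfPlane.I) := by
    have h1 : Real.cosh (2 * Real.log (nu a)) <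
        Real.cosh (dist UpperHalfPlane.I (A • UpperHalfPlane.I)) := by
      rw [cosh_two_log_nu ha, hcosh, ← htr_eq]
      linarith
    have := Real.cosh_lt_cosh.mp h1
    rwa [abs_of_nonneg (by linarith), abs_of_nonneg dist_nonneg] at this
  intro z hz
  simp only [Metric.mem_ball] at hz
  simp only [Set.mem_setOf_eq]
  have ht : dist UpperHalfPlane.I (A • UpperHalfPlane.I) ≤
      dist UpperHalfPlane.I z + dist z (A • UpperHalfPlane.I) := dist_triangle _ _ _
  have : dist UpperHalfPlane.I z = dist z UpperHalfPlane.I := dist_comm _ _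
  linarith
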